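/- Let n ≥ 4 and 0 < ε < 1, and consider the star Minimum Multicut instance I(n,ε): vertices s₁,…,s_{n−1}, u; terminal pairs all {s_i, s_j} with i ≠ j; edges (u,s₁) of weight n−2−ε/2 and (u,s_i) of weight 1 for 2 ≤ i ≤ n−1. Let E* = {(u,s_i) : 2 ≤ i ≤ n−1}. Then E* is a multicut of minimum weight n−2, and the instance is (n−2−ε)-stable: for every multicut E' ≠ E*, w(E'∖E*) > (n−2−ε)·w(E*∖E'). -/
import Mathlib


open Finset

/-- The star graph of the Minimum Multicut instance `I(n, ε)`: vertices are
`s₁, …, s_{n−1}` (the elements `some i`, where `s₁` corresponds to `i = 0`) together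
with the center `u` (the element `none`); the edges are exactly the pairs `(u, s_i)`. -/
def starGraph (n : ℕ) : SimpleGraph (Option (Fin (n - 1))) :=
  SimpleGraph.fromRel (fun x y => x = none ∨ y = none)

/-- Edge weights of the instance `I(n, ε)`: the edge `(u, s₁)` has weight `n − 2 − ε/2`
and the edges `(u, s_i)`, `2 ≤ i ≤ n − 1`, have weight `1`; all other pairs get `0`. -/
noncomputable def starWeight (n : ℕ) (ε : ℝ) :
    Option (Fin (n - 1)) → Option (Fin (n - 1)) → ℝ
  | none, some i => if (i : ℕ) = 0 then (n : ℝ) - 2 - ε / 2 else 1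
  | some i, none => if (i : ℕ) = 0 then (n : ℝ) - 2 - ε / 2 else 1
  | _, _ => 0

/-- The total weight of a set `F` of (unordered) edges of the instance `I(n, ε)`
(the ordered double sum counts every pair twice). -/
noncomputable def starEdgesWeight (n : ℕ) (ε : ℝ)
    (F : Finset (Sym2 (Option (Fin (n - 1))))) : ℝ :=
  (∑ x, ∑ y, if s(x, y) ∈ F then starWeight n ε x y else 0) / 2

/-- `E'` is a multicut of the instance `I(n, ε)`: a set of edges of the star graph whose
removal disconnects every pair of distinct terminals `s_i, s_j`. -/
def IsStarMulticut (n : ℕ) (E' : Finset (Sym2 (Option (Fin (n - 1))))) : Prop :=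
  ↑E' ⊆ (starGraph n).edgeSet ∧
  ∀ i j : Fin (n - 1), i ≠ j →
    ¬ ((starGraph n).deleteEdges ↑E').Reachable (some i) (some j)

/-- The multicut `E* = {(u, s_i) : 2 ≤ i ≤ n − 1}`. -/
noncomputable def starEstar (n : ℕ) : Finset (Sym2 (Option (Fin (n - 1)))) :=
  have := Classical.propDecidable
  Finset.univ.filter (fun e => ∃ i : Fin (n - 1), (i : ℕ) ≠ 0 ∧ e = s(none, some i))


section Aux

variable {n : ℕ}

lemma se_eq_se_iff {i j : Fin (n-1)} :
    (s(none, some i) : Sym2 (Option (Fin (n-1)))) = s(none, some j) ↔ i = j := by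
  simp [Sym2.eq_iff]

lemma mem_starEstar {e : Sym2 (Option (Fin (n-1)))} :
    e ∈ starEstar n ↔ ∃ i : Fin (n-1), (i:ℕ) ≠ 0 ∧ e = s(none, some i) := by
  simp [starEstar]

lemma starGraph_adj {x y : Option (Fin (n-1))} :
    (starGraph n).Adj x y ↔ x ≠ y ∧ (x = none ∨ y = none) := by
  constructor
  · rintro ⟨hne, h | h⟩ <;> exact ⟨hne, by tauto⟩
  · rintro ⟨hne, h⟩; exact ⟨hne, by tauto⟩

lemma w_ns (ε : ℝ) (i : Fin (n-1)) :
    starWeight n ε none (some i) = if (i:ℕ) = 0 then (n:ℝ) - 2 - ε/2 else 1 := rfl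
lemma w_sn (ε : ℝ) (i : Fin (n-1)) :
    starWeight n ε (some i) none = if (i:ℕ) = 0 then (n:ℝ) - 2 - ε/2 else 1 := rfl
lemma w_nn (ε : ℝ) : starWeight n ε (none : Option (Fin (n-1))) none = 0 := rfl
lemma w_ss (ε : ℝ) (i j : Fin (n-1)) : starWeight n ε (some i) (some j) = 0 := rfl

lemma starEdgesWeight_eq (n : ℕ) (ε : ℝ) (F : Finset (Sym2 (Option (Fin (n-1))))) :
    starEdgesWeight n ε F = ∑ i : Fin (n-1),
      (if s(none, some i) ∈ F then (if (i:ℕ) = 0 then (n:ℝ) - 2 - ε/2 else 1) else 0) := by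
  have hswap : ∀ i : Fin (n-1),
      (s(some i, none) : Sym2 (Option (Fin (n-1)))) = s(none, some i) :=
    fun i => Sym2.eq_swap
  unfold starEdgesWeight
  simp only [Fintype.sum_option, w_nn, w_ns, w_sn, w_ss, hswap, ite_self,
    Finset.sum_const_zero, add_zero, zero_add]
  ring

lemma mem_starGraph_edgeSet {e : Sym2 (Option (Fin (n-1)))}
    (he : e ∈ (starGraph n).edgeSet) : ∃ i, e = s(none, some i) := by
  induction e using Sym2.ind with
  | _ x y =>
    rw [SimpleGraph.mem_edgeSet, starGraph_adj] at he
    obtain ⟨hne, h | h⟩ := he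
    · subst h
      cases y with
      | none => exact absurd rfl hne
      | some i => exact ⟨i, rfl⟩
    · subst h
      cases x with
      | none => exact absurd rfl hne
      | some i => exact ⟨i, Sym2.eq_swap⟩

lemma reach_eq_of_adj_eq {V : Type*} {G : SimpleGraph V} {α : Type*} (f : V → α)
    (ha : ∀ x y, G.Adj x y → f x = f y) {x y : V} (h : G.Reachable x y) : f x = f y := by
  obtain ⟨w⟩ := h
  induction w with
  | nil => rfl
  | cons h _ ih => exact (ha _ _ h).trans ih

lemma multicut_pair {E' : Finset (Sym2 (Option (Fin (n-1))))}
    (h : IsStarMulticut n E') {i j : Fin (n-1)} (hij : i ≠ j)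
    (hi : s(none, some i) ∉ E') : s(none, some j) ∈ E' := by
  by_contra hj
  apply h.2 i j hij
  have h1 : ((starGraph n).deleteEdges ↑E').Adj (some i) none := by
    rw [SimpleGraph.deleteEdges_adj]
    refine ⟨starGraph_adj.2 ⟨by simp, Or.inr rfl⟩, ?_⟩
    rw [Sym2.eq_swap]
    simpa using hi
  have h2 : ((starGraph n).deleteEdges ↑E').Adj none (some j) := by
    rw [SimpleGraph.deleteEdges_adj]
    refine ⟨starGraph_adj.2 ⟨by simp, Or.inl rfl⟩, ?_⟩
    simpa using hj
  exact h1.reachable.trans h2.reachable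

end Aux

/-- For `n ≥ 4` and `0 < ε < 1`, in the star Minimum Multicut instance
`I(n, ε)` the set `E*` is a multicut of minimum weight `n − 2`, and the instance is
`(n − 2 − ε)`-stable: for every multicut `E' ≠ E*`,
`w(E'∖E*) > (n − 2 − ε)·w(E*∖E')`. -/
theorem stmt15 (n : ℕ) (hn : 4 ≤ n) (ε : ℝ) (hε0 : 0 < ε) (hε1 : ε < 1) :
    IsStarMulticut n (starEstar n) ∧
    starEdgesWeight n ε (starEstar n) = (n : ℝ) - 2 ∧
    (∀ E' : Finset (Sym2 (Option (Fin (n - 1)))), IsStarMulticut n E' →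
      starEdgesWeight n ε (starEstar n) ≤ starEdgesWeight n ε E') ∧
    (∀ E' : Finset (Sym2 (Option (Fin (n - 1)))), IsStarMulticut n E' →
      E' ≠ starEstar n →
      ((n : ℝ) - 2 - ε) * starEdgesWeight n ε (starEstar n \ E') <
        starEdgesWeight n ε (E' \ starEstar n)) := by
  have hn4 : (4:ℝ) ≤ (n:ℝ) := by exact_mod_cast hn
  set i0 : Fin (n-1) := ⟨0, by omega⟩ with hi0
  have hi0v : (i0 : ℕ) = 0 := rfl
  have hvne : ∀ i : Fin (n-1), i ≠ i0 ↔ (i:ℕ) ≠ 0 := by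
    intro i; constructor
    · intro h hc; exact h (Fin.ext (by simp [hc, hi0v]))
    · intro h hc; exact h (by simp [hc, hi0v])
  have hmemE : ∀ i : Fin (n-1), s(none, some i) ∈ starEstar n ↔ (i:ℕ) ≠ 0 := by
    intro i
    rw [mem_starEstar]
    constructor
    · rintro ⟨j, hj, hij⟩; rwa [se_eq_se_iff.1 hij]
    · intro h; exact ⟨i, h, rfl⟩
  -- E* is a multicut
  have hcut : IsStarMulticut n (starEstar n) := by
    constructor
    · intro e he
      obtain ⟨i, _, rfl⟩ := mem_starEstar.1 he
      rw [SimpleGraph.mem_edgeSet]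
      exact starGraph_adj.2 ⟨by simp, Or.inl rfl⟩
    · intro i j hij hr
      set f : Option (Fin (n-1)) → ℕ := fun x => match x with
        | none => 0
        | some i => if (i:ℕ) = 0 then 0 else (i:ℕ) + 1 with hf
      have key : ∀ x y, ((starGraph n).deleteEdges ↑(starEstar n)).Adj x y → f x = f y := by
        intro x y hxy
        rw [SimpleGraph.deleteEdges_adj] at hxy
        obtain ⟨hadj, hmem⟩ := hxy
        rw [starGraph_adj] at hadj
        obtain ⟨hne, h | h⟩ := hadj
        · subst h
          cases y with
          | none => rfl
          | some k =>
            have : (k:ℕ) = 0 := by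
              by_contra hk
              exact hmem (by simpa using (hmemE k).2 hk)
            simp [hf, this]
        · subst h
          cases x with
          | none => rfl
          | some k =>
            have : (k:ℕ) = 0 := by
              by_contra hk
              apply hmem
              rw [Sym2.eq_swap]
              simpa using (hmemE k).2 hk
            simp [hf, this]
      have := reach_eq_of_adj_eq f key hr
      have hfi : ∀ k : Fin (n-1), f (some k) = if (k:ℕ) = 0 then 0 else (k:ℕ) + 1 :=
        fun _ => rfl
      rw [hfi, hfi] at this
      split_ifs at this with h1 h2 h2 <;>
        exact hij (Fin.ext (by omega))
  -- weight of E*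
  have hWE : starEdgesWeight n ε (starEstar n) = (n:ℝ) - 2 := by
    rw [starEdgesWeight_eq]
    have : ∀ i : Fin (n-1),
        (if s(none, some i) ∈ starEstar n then (if (i:ℕ) = 0 then (n:ℝ) - 2 - ε/2 else 1) else 0)
          = if (i:ℕ) = 0 then 0 else 1 := by
      intro i
      by_cases hz : (i:ℕ) = 0 <;> simp [hmemE i, hz]
    rw [Finset.sum_congr rfl (fun i _ => this i)]
    have h0 : (univ.filter fun i : Fin (n-1) => (i:ℕ) = 0) = {i0} := by
      ext i
      simp [Fin.ext_iff, hi0v]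
    rw [Finset.sum_ite, Finset.sum_const, Finset.sum_const, h0]
    have hcard : (univ.filter fun i : Fin (n-1) => ¬((i:ℕ) = 0)).card = n - 2 := by
      have := Finset.card_filter_add_card_filter_not
        (s := (univ : Finset (Fin (n-1)))) (p := fun i => (i:ℕ) = 0)
      rw [h0] at this
      simp at this
      omega
    rw [hcard]
    have : ((n - 2 : ℕ) : ℝ) = (n:ℝ) - 2 := by
      rw [Nat.cast_sub (by omega)]; norm_num
    simp [this]
  refine ⟨hcut, hWE, ?_, ?_⟩
  · -- minimality
    intro E' h'
    rw [hWE, starEdgesWeight_eq]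
    have hterm : ∀ i : Fin (n-1),
        (if s(none, some i) ∈ E' then (1:ℝ) else 0) ≤
        (if s(none, some i) ∈ E' then (if (i:ℕ) = 0 then (n:ℝ) - 2 - ε/2 else 1) else 0) := by
      intro i
      by_cases hm : s(none, some i) ∈ E' <;> simp [hm]
      by_cases hz : (i:ℕ) = 0 <;> simp [hz]
      linarith
    have hsum := Finset.sum_le_sum (s := (univ : Finset (Fin (n-1)))) (fun i _ => hterm i)
    rw [Finset.sum_boole] at hsum
    refine le_trans ?_ hsum
    have hone : (univ.filter fun i : Fin (n-1) => s(none, some i) ∉ E').card ≤ 1 := by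
      rw [Finset.card_le_one]
      intro a ha b hb
      simp only [Finset.mem_filter] at ha hb
      by_contra hab
      exact ha.2 (multicut_pair h' (Ne.symm hab) hb.2)
    have hsplit := Finset.card_filter_add_card_filter_not
      (s := (univ : Finset (Fin (n-1)))) (p := fun i => s(none, some i) ∈ E')
    simp only [Finset.card_univ, Fintype.card_fin] at hsplit
    have hA : n - 2 ≤ (univ.filter fun i : Fin (n-1) => s(none, some i) ∈ E').card := by
      omega
    have : ((n - 2 : ℕ) : ℝ) ≤ ((univ.filter fun i : Fin (n-1) => s(none, some i) ∈ E').card : ℝ) := by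
      exact_mod_cast hA
    calc (n:ℝ) - 2 = ((n - 2 : ℕ) : ℝ) := by rw [Nat.cast_sub (by omega)]; norm_num
    _ ≤ _ := this
  · -- stability
    intro E' h' hne
    have h0 : s(none, some i0) ∈ E' := by
      by_contra h0
      apply hne
      ext e
      constructor
      · intro he
        obtain ⟨i, rfl⟩ := mem_starGraph_edgeSet (h'.1 he)
        have hiz : (i:ℕ) ≠ 0 := by
          intro hc
          have : i = i0 := Fin.ext (by simp [hc, hi0v])
          exact h0 (this ▸ he)
        exact (hmemE i).2 hiz
      · intro he
        obtain ⟨i, hiz, rfl⟩ := mem_starEstar.1 he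
        exact multicut_pair h' (fun hc => hiz (by rw [← hc])) h0
    have hdiff : E' \ starEstar n = {s(none, some i0)} := by
      ext e
      rw [Finset.mem_sdiff, Finset.mem_singleton]
      constructor
      · rintro ⟨he, hne'⟩
        obtain ⟨i, rfl⟩ := mem_starGraph_edgeSet (h'.1 he)
        have : (i:ℕ) = 0 := by
          by_contra hiz
          exact hne' ((hmemE i).2 hiz)
        rw [se_eq_se_iff]
        exact Fin.ext (by simp [this, hi0v])
      · rintro rfl
        exact ⟨h0, fun hc => ((hmemE i0).1 hc) hi0v⟩
    have hright : starEdgesWeight n ε (E' \ starEstar n) = (n:ℝ) - 2 - ε/2 := by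
      rw [hdiff, starEdgesWeight_eq]
      have : ∀ i : Fin (n-1),
          (if s(none, some i) ∈ ({s(none, some i0)} : Finset (Sym2 (Option (Fin (n-1))))) then
            (if (i:ℕ) = 0 then (n:ℝ) - 2 - ε/2 else 1) else 0)
          = if i = i0 then (if (i:ℕ) = 0 then (n:ℝ) - 2 - ε/2 else 1) else 0 := by
        intro i
        simp only [Finset.mem_singleton, se_eq_se_iff]
      rw [Finset.sum_congr rfl (fun i _ => this i), Finset.sum_ite_eq' univ i0]
      simp [hi0v]
    -- left sum: weight of E* \ E' is the card of missing edges, at most 1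
    have hleft : starEdgesWeight n ε (starEstar n \ E') =
        ((univ.filter fun i : Fin (n-1) => s(none, some i) ∈ starEstar n \ E').card : ℝ) := by
      rw [starEdgesWeight_eq, ← Finset.sum_boole]
      refine Finset.sum_congr rfl (fun i _ => ?_)
      by_cases hm : s(none, some i) ∈ starEstar n \ E'
      · have hiz : (i:ℕ) ≠ 0 := (hmemE i).1 (Finset.mem_sdiff.1 hm).1
        simp [hm, hiz]
      · simp [hm]
    have hle1 : ((univ.filter fun i : Fin (n-1) => s(none, some i) ∈ starEstar n \ E').card : ℝ) ≤ 1 := by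
      have : (univ.filter fun i : Fin (n-1) => s(none, some i) ∈ starEstar n \ E').card ≤ 1 := by
        rw [Finset.card_le_one]
        intro a ha b hb
        simp only [Finset.mem_filter, Finset.mem_sdiff] at ha hb
        by_contra hab
        exact ha.2.2 (multicut_pair h' (Ne.symm hab) hb.2.2)
      exact_mod_cast this
    have hge0 : (0:ℝ) ≤ ((univ.filter fun i : Fin (n-1) => s(none, some i) ∈ starEstar n \ E').card : ℝ) := by
      positivity
    rw [hleft, hright]
    nlinarith [mul_le_mul_of_nonneg_left hle1 (show (0:ℝ) ≤ (n:ℝ) - 2 - ε by linarith)]
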